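/- Let E₁ and E₂ be real vector spaces with E₂ finite-dimensional, let E = E₁ × E₂, and let T : E → E be a linear map of the block-triangular form T(x₁, x₂) = (x₁ + T₁₂x₂, T₂₂x₂), where T₁₂ : E₂ → E₁ and T₂₂ : E₂ → E₂ are linear. Then T is admissible (range(id_E − T) is finite-dimensional) and det T = det T₂₂; explicitly, for any finite-dimensional subspace W of E containing range(id_E − T), the determinant of the restriction of T to W equals the determinant of T₂₂. -/

import Mathlib

open LinearMap

private lemma det_triangular_aux {P Q : Type*} [AddCommGroup P] [Module ℝ P] [AddCommGroup Q]
    [Module ℝ Q] [FiniteDimensional ℝ P] [FiniteDimensional ℝ Q]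
    (A : P →ₗ[ℝ] P) (B : Q →ₗ[ℝ] P) (D : Q →ₗ[ℝ] Q) :
    LinearMap.det ((A.comp (LinearMap.fst ℝ P Q) + B.comp (LinearMap.snd ℝ P Q)).prod
      (D.comp (LinearMap.snd ℝ P Q))) = LinearMap.det A * LinearMap.det D := by
  classical
  let bP := Module.finBasis ℝ P
  let bQ := Module.finBasis ℝ Q
  let b := bP.prod bQ
  rw [← LinearMap.det_toMatrix b, ← LinearMap.det_toMatrix bP A, ← LinearMap.det_toMatrix bQ D,
    ← Matrix.det_fromBlocks_zero₂₁ (LinearMap.toMatrix bP bP A) (LinearMap.toMatrix bQ bP B)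
      (LinearMap.toMatrix bQ bQ D)]
  congr 1
  ext (i | i) (j | j) <;>
    simp [b, LinearMap.toMatrix_apply, Matrix.fromBlocks]

private lemma det_eq_det_restrict {M : Type*} [AddCommGroup M] [Module ℝ M]
    [FiniteDimensional ℝ M]
    (f : M →ₗ[ℝ] M) (p : Submodule ℝ M) (hp : ∀ x ∈ p, f x ∈ p)
    (hid : ∀ x : M, f x - x ∈ p) :
    LinearMap.det f = LinearMap.det (f.restrict hp) := by
  obtain ⟨q, hq⟩ := Submodule.exists_isCompl p
  let e : (p × q) ≃ₗ[ℝ] M := Submodule.prodEquivOfIsCompl p q hq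
  set A := f.restrict hp with hA
  set B : q →ₗ[ℝ] p :=
    LinearMap.codRestrict p ((f - LinearMap.id).comp q.subtype) (fun b => hid b) with hB
  have hform : (e.symm : M →ₗ[ℝ] p × q) ∘ₗ f ∘ₗ (e : p × q →ₗ[ℝ] M)
      = (A.comp (fst ℝ p q) + B.comp (snd ℝ p q)).prod
          ((LinearMap.id : q →ₗ[ℝ] q).comp (snd ℝ p q)) := by
    apply LinearMap.ext
    rintro ⟨a, b⟩
    apply e.injective
    simp only [LinearMap.comp_apply, LinearEquiv.coe_coe]
    rw [e.apply_symm_apply]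
    have he : ∀ x : p × q, e x = (x.1 : M) + (x.2 : M) :=
      fun x => Submodule.coe_prodEquivOfIsCompl' p q hq x
    rw [he, he]
    simp only [LinearMap.prod_apply, Function.prod, LinearMap.add_apply, LinearMap.comp_apply,
      fst_apply, snd_apply, id_apply, Submodule.coe_add, hA, hB,
      LinearMap.restrict_coe_apply, LinearMap.codRestrict_apply, LinearMap.sub_apply,
      LinearMap.comp_apply, Submodule.coe_subtype, LinearMap.id_apply, map_add]
    change f ↑a + f ↑b = f ↑a + (f ↑b - ↑b) + ↑b
    abel
  have hconj := LinearMap.det_conj ((e.symm : M →ₗ[ℝ] p × q) ∘ₗ f ∘ₗ (e : p × q →ₗ[ℝ] M)) e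
  have heq : (e : p × q →ₗ[ℝ] M) ∘ₗ ((e.symm : M →ₗ[ℝ] p × q) ∘ₗ f ∘ₗ (e : p × q →ₗ[ℝ] M)) ∘ₗ
      (e.symm : M →ₗ[ℝ] p × q) = f := by
    apply LinearMap.ext; intro x
    simp
  rw [heq] at hconj
  rw [hconj, hform, det_triangular_aux, LinearMap.det_id, mul_one]

private lemma det_restrict_restrict {M : Type*} [AddCommGroup M] [Module ℝ M]
    (f : M →ₗ[ℝ] M) {W U : Submodule ℝ M} (hWU : W ≤ U)
    (hU : ∀ x ∈ U, f x ∈ U) (hW : ∀ x ∈ W, f x ∈ W)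
    (hW' : ∀ y ∈ Submodule.comap U.subtype W, (f.restrict hU) y ∈ Submodule.comap U.subtype W) :
    LinearMap.det ((f.restrict hU).restrict hW') = LinearMap.det (f.restrict hW) := by
  let e := Submodule.comapSubtypeEquivOfLe hWU
  have hconj := LinearMap.det_conj ((f.restrict hU).restrict hW') e
  rw [← hconj]
  congr 1

/-- The linear equivalence between `p × E₂` and the submodule `p.prod ⊤`. -/
private noncomputable def prodTopEquiv {E₁ E₂ : Type*} [AddCommGroup E₁] [Module ℝ E₁]
    [AddCommGroup E₂] [Module ℝ E₂] (p : Submodule ℝ E₁) :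
    (↥p × E₂) ≃ₗ[ℝ] (p.prod (⊤ : Submodule ℝ E₂)) :=
  LinearEquiv.ofLinear
    (LinearMap.codRestrict (p.prod ⊤) (p.subtype.prodMap LinearMap.id)
      (fun x => ⟨x.1.2, trivial⟩))
    ((LinearMap.codRestrict p ((LinearMap.fst ℝ E₁ E₂).comp (p.prod ⊤).subtype)
        (fun w => w.2.1)).prod ((LinearMap.snd ℝ E₁ E₂).comp (p.prod ⊤).subtype))
    (by
      apply LinearMap.ext
      rintro ⟨⟨x₁, x₂⟩, hx⟩
      apply Subtype.ext
      rfl)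
    (by
      apply LinearMap.ext
      rintro ⟨a, b⟩
      apply Prod.ext
      · apply Subtype.ext
        rfl
      · rfl)

/-- The determinant of an admissible endomorphism `S` (one with `range (id − S)`
finite-dimensional): the determinant of the restriction of `S` to any finite-dimensional
subspace containing `range (id − S)`, here the minimal one. -/
noncomputable def admDet {E : Type*} [AddCommGroup E] [Module ℝ E] (S : E →ₗ[ℝ] E) : ℝ :=
  LinearMap.det (S.restrict
    (p := LinearMap.range ((LinearMap.id : E →ₗ[ℝ] E) - S))
    (q := LinearMap.range ((LinearMap.id : E →ₗ[ℝ] E) - S))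
    (fun x hx => by
      have h1 : ((LinearMap.id : E →ₗ[ℝ] E) - S) x ∈
          LinearMap.range ((LinearMap.id : E →ₗ[ℝ] E) - S) :=
        LinearMap.mem_range_self _ x
      have h2 : S x = x - ((LinearMap.id : E →ₗ[ℝ] E) - S) x := by
        simp
      rw [h2]
      exact Submodule.sub_mem _ hx h1))

/-- A block-triangular linear map `T(x₁, x₂) = (x₁ + T₁₂x₂, T₂₂x₂)` on `E = E₁ × E₂` with `E₂`
finite-dimensional is admissible and `det T = det T₂₂`; explicitly, the determinant of the
restriction of `T` to any finite-dimensional subspace containing `range (id − T)` is `det T₂₂`. -/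
theorem block_triangular_admissible_det
    {E₁ E₂ : Type*} [AddCommGroup E₁] [Module ℝ E₁] [AddCommGroup E₂] [Module ℝ E₂]
    [FiniteDimensional ℝ E₂]
    (T : (E₁ × E₂) →ₗ[ℝ] (E₁ × E₂)) (T₁₂ : E₂ →ₗ[ℝ] E₁) (T₂₂ : E₂ →ₗ[ℝ] E₂)
    (hT : ∀ x : E₁ × E₂, T x = (x.1 + T₁₂ x.2, T₂₂ x.2)) :
    FiniteDimensional ℝ (LinearMap.range ((LinearMap.id : (E₁ × E₂) →ₗ[ℝ] (E₁ × E₂)) - T)) ∧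
    admDet T = LinearMap.det T₂₂ ∧
    (∀ W : Submodule ℝ (E₁ × E₂), FiniteDimensional ℝ W →
      LinearMap.range ((LinearMap.id : (E₁ × E₂) →ₗ[ℝ] (E₁ × E₂)) - T) ≤ W →
      ∀ (hW : ∀ x ∈ W, T x ∈ W),
        LinearMap.det (T.restrict hW) = LinearMap.det T₂₂) := by
  have hinv : ∀ S : Submodule ℝ (E₁ × E₂),
      LinearMap.range ((LinearMap.id : (E₁ × E₂) →ₗ[ℝ] (E₁ × E₂)) - T) ≤ S →
      ∀ x ∈ S, T x ∈ S := by
    intro S hS x hx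
    have h2 : T x = x - ((LinearMap.id : (E₁ × E₂) →ₗ[ℝ] (E₁ × E₂)) - T) x := by simp
    rw [h2]
    exact Submodule.sub_mem _ hx (hS (LinearMap.mem_range_self _ x))
  set p₁ := LinearMap.range T₁₂ with hp₁
  set Wstar := p₁.prod (⊤ : Submodule ℝ E₂) with hWs
  haveI hWsFD : FiniteDimensional ℝ Wstar := Module.Finite.equiv (prodTopEquiv p₁)
  have hRWs : LinearMap.range ((LinearMap.id : (E₁ × E₂) →ₗ[ℝ] (E₁ × E₂)) - T) ≤ Wstar := by
    rintro x ⟨y, rfl⟩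
    have hy : ((LinearMap.id : (E₁ × E₂) →ₗ[ℝ] (E₁ × E₂)) - T) y
        = (-(T₁₂ y.2), y.2 - T₂₂ y.2) := by
      rw [LinearMap.sub_apply, LinearMap.id_apply, hT y]
      apply Prod.ext
      · simp
      · simp
    rw [hy]
    exact Submodule.mem_prod.mpr ⟨⟨-y.2, by simp⟩, trivial⟩
  have hWsInv : ∀ x ∈ Wstar, T x ∈ Wstar := hinv Wstar hRWs
  have key : ∀ W : Submodule ℝ (E₁ × E₂), FiniteDimensional ℝ W →
      LinearMap.range ((LinearMap.id : (E₁ × E₂) →ₗ[ℝ] (E₁ × E₂)) - T) ≤ W →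
      ∀ (hW : ∀ x ∈ W, T x ∈ W),
        LinearMap.det (T.restrict hW) = LinearMap.det T₂₂ := by
    intro W instW hle hW
    haveI := instW
    set U := W ⊔ Wstar with hU
    haveI : FiniteDimensional ℝ U := Submodule.finiteDimensional_sup W Wstar
    have hRU : LinearMap.range ((LinearMap.id : (E₁ × E₂) →ₗ[ℝ] (E₁ × E₂)) - T) ≤ U :=
      le_trans hle le_sup_left
    have hUinv : ∀ x ∈ U, T x ∈ U := hinv U hRU
    have step : ∀ (V : Submodule ℝ (E₁ × E₂)) (hVU : V ≤ U)
        (hleV : LinearMap.range ((LinearMap.id : (E₁ × E₂) →ₗ[ℝ] (E₁ × E₂)) - T) ≤ V)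
        (hV : ∀ x ∈ V, T x ∈ V),
        LinearMap.det (T.restrict hV) = LinearMap.det (T.restrict hUinv) := by
      intro V hVU hleV hV
      have hV' : ∀ y ∈ Submodule.comap U.subtype V,
          (T.restrict hUinv) y ∈ Submodule.comap U.subtype V := by
        rintro ⟨x, hxU⟩ hx
        simp only [Submodule.mem_comap, Submodule.coe_subtype,
          LinearMap.restrict_coe_apply] at hx ⊢
        exact hV x hx
      have hid1 : ∀ y : U, (T.restrict hUinv) y - y ∈ Submodule.comap U.subtype V := by
        intro y
        simp only [Submodule.mem_comap, Submodule.coe_subtype, AddSubgroupClass.coe_sub,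
          LinearMap.restrict_coe_apply]
        have h3 : T (y : E₁ × E₂) - (y : E₁ × E₂)
            = -(((LinearMap.id : (E₁ × E₂) →ₗ[ℝ] (E₁ × E₂)) - T) (y : E₁ × E₂)) := by simp
        rw [h3]
        exact V.neg_mem (hleV (LinearMap.mem_range_self _ _))
      rw [← det_restrict_restrict T hVU hUinv hV hV',
        ← det_eq_det_restrict (T.restrict hUinv) _ hV' hid1]
    have e1 := step W le_sup_left hle hW
    have e2 := step Wstar le_sup_right hRWs hWsInv
    rw [e1, ← e2]
    let e := (prodTopEquiv (E₂ := E₂) p₁).symm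
    have hconj := LinearMap.det_conj (T.restrict hWsInv) e
    rw [← hconj]
    have hform : (e : Wstar →ₗ[ℝ] ↥p₁ × E₂) ∘ₗ (T.restrict hWsInv) ∘ₗ
          (e.symm : (↥p₁ × E₂) →ₗ[ℝ] Wstar)
        = ((LinearMap.id : ↥p₁ →ₗ[ℝ] ↥p₁).comp (LinearMap.fst ℝ ↥p₁ E₂)
            + (LinearMap.codRestrict p₁ T₁₂
                (fun b => LinearMap.mem_range_self _ b)).comp (LinearMap.snd ℝ ↥p₁ E₂)).prod
            (T₂₂.comp (LinearMap.snd ℝ ↥p₁ E₂)) := by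
      apply LinearMap.ext
      rintro ⟨a, b⟩
      apply Prod.ext
      · apply Subtype.ext
        simp [e, prodTopEquiv, hT]
        change (T ((a : E₁), b)).1 = ↑a + T₁₂ b
        simp [hT]
      · simp [e, prodTopEquiv, hT]
        rfl
    rw [hform, det_triangular_aux, LinearMap.det_id, one_mul]
  haveI part1 : FiniteDimensional ℝ
      (LinearMap.range ((LinearMap.id : (E₁ × E₂) →ₗ[ℝ] (E₁ × E₂)) - T)) :=
    Submodule.finiteDimensional_of_le hRWs
  exact ⟨part1, key _ part1 le_rfl _, key⟩
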